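/- Let v and v' be votings of the nation over a finite candidate set containing distinct candidates A and B, such that under v, candidate A receives strictly more votes than every other candidate in every one of the K regions. Suppose v' is obtained from v by changing some cells' votes from A to B (all other votes unchanged), with every changed cell lying in the union of B_blk pairwise disjoint m_n × m_n noise-concentrated blocks contained in the nation; set S_c = B_blk·m_n². If S_c < (m_n²/m_r²) · (1/(⌈m_n/m_r⌉ + 1)²) · (N/2), then under v' candidate A receives a strict plurality in strictly more than half of the K regions; in particular A wins strictly more regions than any other candidate, so regional voting still selects A. -/

import Mathlib

/-- The nation: the set of cells `{0,…,L−1} × {0,…,M−1} ⊆ ℤ²`. -/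
noncomputable def nation (L M : ℤ) : Finset (ℤ × ℤ) :=
  Finset.Ico 0 L ×ˢ Finset.Ico 0 M

/-- The region index of a cell `(x, y)` for the (unshifted) partition into `m × m` squares:
`(⌊x/m⌋, ⌊y/m⌋)`. -/
def regionIdx (m : ℤ) (p : ℤ × ℤ) : ℤ × ℤ :=
  (p.1.fdiv m, p.2.fdiv m)

/-- The `mn × mn` noise-concentrated block at position `(u, v)`. -/
noncomputable def noiseBlock (mn u v : ℤ) : Finset (ℤ × ℤ) :=
  Finset.Ico u (u + mn) ×ˢ Finset.Ico v (v + mn)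

/-- The number of votes that candidate `c` receives in the region with index `r` under
voting `v`. -/
noncomputable def votesIn {C : Type} [DecidableEq C] (L M mr : ℤ) (v : ℤ × ℤ → C) (r : ℤ × ℤ) (c : C) : ℕ :=
  ((nation L M).filter (fun p => regionIdx mr p = r ∧ v p = c)).card

lemma img_Ico_ediv (n d : ℤ) (hd : 0 < d) (hdn : d ∣ n) :
    (Finset.Ico 0 n).image (fun x => x / d) = Finset.Ico 0 (n / d) := by
  have hnd : (n / d) * d = n := by rw [mul_comm]; exact Int.mul_ediv_cancel' hdn
  ext z
  simp only [Finset.mem_image, Finset.mem_Ico]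
  constructor
  · rintro ⟨x, ⟨hx0, hxn⟩, rfl⟩
    refine ⟨Int.ediv_nonneg hx0 hd.le, ?_⟩
    rw [Int.ediv_lt_iff_lt_mul hd, hnd]; exact hxn
  · rintro ⟨hz0, hzn⟩
    refine ⟨z * d, ⟨by positivity, ?_⟩, by rw [Int.mul_ediv_cancel _ hd.ne']⟩
    calc z * d < (n / d) * d := by exact mul_lt_mul_of_pos_right hzn hd
    _ = n := hnd

lemma img_Ico_block (u mn d q : ℤ) (hd : 0 < d) (hq : mn ≤ q * d) :
    (Finset.Ico u (u + mn)).image (fun x => x / d) ⊆ Finset.Ico (u / d) (u / d + (q + 1)) := by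
  intro z hz
  simp only [Finset.mem_image, Finset.mem_Ico] at hz ⊢
  obtain ⟨x, ⟨hux, hxu⟩, rfl⟩ := hz
  refine ⟨Int.ediv_le_ediv hd hux, ?_⟩
  rw [Int.ediv_lt_iff_lt_mul hd]
  have h2 : u < (u / d + 1) * d := Int.lt_ediv_add_one_mul_self u hd
  nlinarith

lemma img_prod {α β γ δ : Type*} [DecidableEq α] [DecidableEq β] [DecidableEq γ] [DecidableEq δ]
    (s : Finset α) (t : Finset β) (f : α → γ) (g : β → δ) :
    (s ×ˢ t).image (fun p => (f p.1, g p.2)) = s.image f ×ˢ t.image g := by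
  ext ⟨c, e⟩
  simp only [Finset.mem_image, Finset.mem_product, Prod.mk.injEq, Prod.exists]
  aesop

/-- Theorem 3, item 2: with finitely many candidates, if A has a strict plurality in every
region under `v`, and `v'` is obtained from `v` by changing some votes from A to B, all the
changed cells lying in a union of pairwise disjoint `m_n × m_n` blocks of total size
`S_c < (m_n²/m_r²) · (1/(⌈m_n/m_r⌉+1)²) · N/2`, then under `v'` candidate A has a strict
plurality in strictly more than half of the `K` regions; in particular A wins strictly more
regions than any other candidate. -/
theorem regional_voting_retains_A_multicandidate {C : Type} [Fintype C] [DecidableEq C]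
    (A B : C) (hAB : A ≠ B) (L M mr mn : ℤ)
    (hL : 0 < L) (hM : 0 < M) (hmr : 1 ≤ mr) (hmn : 1 ≤ mn)
    (hdL : mr ∣ L) (hdM : mr ∣ M)
    (v v' : ℤ × ℤ → C)
    (hAwins : ∀ r ∈ (nation L M).image (regionIdx mr),
      ∀ c : C, c ≠ A → votesIn L M mr v r c < votesIn L M mr v r A)
    (hAtoB : ∀ p, v' p = v p ∨ (v p = A ∧ v' p = B))
    (Bblk : ℕ) (pos : Fin Bblk → ℤ × ℤ)
    (hdisj : ∀ i j : Fin Bblk, i ≠ j →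
      Disjoint (noiseBlock mn (pos i).1 (pos i).2) (noiseBlock mn (pos j).1 (pos j).2))
    (hsub : ∀ i : Fin Bblk, noiseBlock mn (pos i).1 (pos i).2 ⊆ nation L M)
    (hdiff : ∀ p, v' p ≠ v p →
      p ∈ Finset.univ.biUnion (fun i : Fin Bblk => noiseBlock mn (pos i).1 (pos i).2))
    (Sc : ℤ) (hSc : Sc = (Bblk : ℤ) * mn ^ 2)
    (hnoise : (Sc : ℚ) < ((mn : ℚ) ^ 2 / (mr : ℚ) ^ 2) *
      (1 / ((⌈(mn : ℚ) / (mr : ℚ)⌉ : ℚ) + 1) ^ 2) * (((L : ℚ) * (M : ℚ)) / 2)) :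
    (((nation L M).image (regionIdx mr)).card <
      2 * (((nation L M).image (regionIdx mr)).filter
        (fun r => ∀ c : C, c ≠ A → votesIn L M mr v' r c < votesIn L M mr v' r A)).card) ∧
    (∀ c : C, c ≠ A →
      (((nation L M).image (regionIdx mr)).filter
        (fun r => ∀ c' : C, c' ≠ c → votesIn L M mr v' r c' < votesIn L M mr v' r c)).card <
      (((nation L M).image (regionIdx mr)).filter
        (fun r => ∀ c' : C, c' ≠ A → votesIn L M mr v' r c' < votesIn L M mr v' r A)).card) := by
  classical
  have hmr0 : (0:ℤ) < mr := by linarith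
  have hmn0 : (0:ℤ) < mn := by linarith
  set q : ℤ := ⌈(mn:ℚ)/(mr:ℚ)⌉ with hqdef
  have hq1 : 1 ≤ q := by
    have h0 : (0:ℚ) < (mn:ℚ)/(mr:ℚ) := by
      apply div_pos <;> exact_mod_cast (by assumption)
    exact Int.ceil_pos.mpr h0
  have hmnq : mn ≤ q * mr := by
    have h := Int.le_ceil ((mn:ℚ)/(mr:ℚ))
    rw [← hqdef, div_le_iff₀ (by exact_mod_cast hmr0)] at h
    exact_mod_cast h
  have hreg : ∀ p : ℤ × ℤ, regionIdx mr p = (p.1 / mr, p.2 / mr) := by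
    intro p
    simp [regionIdx, Int.fdiv_eq_ediv_of_nonneg _ hmr0.le]
  set K := (nation L M).image (regionIdx mr) with hKdef
  have hKeq : K = Finset.Ico 0 (L/mr) ×ˢ Finset.Ico 0 (M/mr) := by
    rw [hKdef]
    have h1 : (nation L M).image (regionIdx mr)
        = (nation L M).image (fun p => (p.1 / mr, p.2 / mr)) :=
      Finset.image_congr (fun p _ => hreg p)
    rw [h1, nation, img_prod (Finset.Ico 0 L) (Finset.Ico 0 M) (fun x => x / mr) (fun x => x / mr), img_Ico_ediv L mr hmr0 hdL, img_Ico_ediv M mr hmr0 hdM]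
  have hL0 : (L/mr) * mr = L := by rw [mul_comm]; exact Int.mul_ediv_cancel' hdL
  have hM0 : (M/mr) * mr = M := by rw [mul_comm]; exact Int.mul_ediv_cancel' hdM
  have hLd0 : 0 ≤ L/mr := Int.ediv_nonneg hL.le hmr0.le
  have hMd0 : 0 ≤ M/mr := Int.ediv_nonneg hM.le hmr0.le
  have hKcard : (K.card : ℤ) = (L/mr) * (M/mr) := by
    rw [hKeq, Finset.card_product, Int.card_Ico, Int.card_Ico]
    push_cast [Int.toNat_of_nonneg (by omega : (0:ℤ) ≤ L/mr - 0),
      Int.toNat_of_nonneg (by omega : (0:ℤ) ≤ M/mr - 0)]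
    ring
  -- bad regions
  set Rbad := ((nation L M).filter (fun p => v' p ≠ v p)).image (regionIdx mr) with hRbaddef
  have hRcard : Rbad.card ≤ Bblk * ((q+1).toNat)^2 := by
    have hRsub : Rbad ⊆ Finset.univ.biUnion
        (fun i : Fin Bblk => (noiseBlock mn (pos i).1 (pos i).2).image (regionIdx mr)) := by
      intro r hr
      simp only [hRbaddef, Finset.mem_image, Finset.mem_filter] at hr
      obtain ⟨p, ⟨_, hpv⟩, rfl⟩ := hr
      have h2 := hdiff p hpv
      simp only [Finset.mem_biUnion] at h2 ⊢
      obtain ⟨i, _, hpi⟩ := h2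
      exact ⟨i, Finset.mem_univ i, Finset.mem_image_of_mem _ hpi⟩
    calc Rbad.card ≤ (Finset.univ.biUnion
          (fun i : Fin Bblk => (noiseBlock mn (pos i).1 (pos i).2).image (regionIdx mr))).card :=
        Finset.card_le_card hRsub
      _ ≤ ∑ i : Fin Bblk, ((noiseBlock mn (pos i).1 (pos i).2).image (regionIdx mr)).card :=
        Finset.card_biUnion_le
      _ ≤ ∑ _i : Fin Bblk, ((q+1).toNat)^2 := by
          refine Finset.sum_le_sum (fun i _ => ?_)
          set u := (pos i).1
          set w := (pos i).2
          have hsub2 : (noiseBlock mn u w).image (regionIdx mr)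
              ⊆ Finset.Ico (u/mr) (u/mr + (q+1)) ×ˢ Finset.Ico (w/mr) (w/mr + (q+1)) := by
            have h1 : (noiseBlock mn u w).image (regionIdx mr)
                = (noiseBlock mn u w).image (fun p => (p.1 / mr, p.2 / mr)) :=
              Finset.image_congr (fun p _ => hreg p)
            rw [h1, noiseBlock, img_prod (Finset.Ico u (u+mn)) (Finset.Ico w (w+mn)) (fun x => x / mr) (fun x => x / mr)]
            exact Finset.product_subset_product (img_Ico_block u mn mr q hmr0 hmnq)
              (img_Ico_block w mn mr q hmr0 hmnq)
          calc ((noiseBlock mn u w).image (regionIdx mr)).card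
              ≤ (Finset.Ico (u/mr) (u/mr + (q+1)) ×ˢ Finset.Ico (w/mr) (w/mr + (q+1))).card :=
              Finset.card_le_card hsub2
            _ = ((q+1).toNat)^2 := by
              rw [Finset.card_product, Int.card_Ico, Int.card_Ico]
              have : u/mr + (q+1) - u/mr = q + 1 := by ring
              rw [this]
              have : w/mr + (q+1) - w/mr = q + 1 := by ring
              rw [this, sq]
      _ = Bblk * ((q+1).toNat)^2 := by simp [Finset.sum_const, Finset.card_univ]
  -- good regions
  set Agood := K.filter
    (fun r => ∀ c : C, c ≠ A → votesIn L M mr v' r c < votesIn L M mr v' r A) with hAgooddef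
  have hgood : K \ Rbad ⊆ Agood := by
    intro r hr
    rw [Finset.mem_sdiff] at hr
    obtain ⟨hrK, hrR⟩ := hr
    rw [hAgooddef, Finset.mem_filter]
    refine ⟨hrK, fun c hc => ?_⟩
    have hvv : ∀ c', votesIn L M mr v' r c' = votesIn L M mr v r c' := by
      intro c'
      unfold votesIn
      congr 1
      apply Finset.filter_congr
      intro p hp
      by_cases hpr : regionIdx mr p = r
      · have hpe : v' p = v p := by
          by_contra hne
          apply hrR
          rw [hRbaddef, ← hpr]
          exact Finset.mem_image_of_mem _ (Finset.mem_filter.mpr ⟨hp, hne⟩)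
        simp [hpe]
      · simp [hpr]
    rw [hvv, hvv]
    exact hAwins r hrK c hc
  have hcover : K.card ≤ Agood.card + Rbad.card := by
    have hsub3 : K ⊆ Agood ∪ Rbad := by
      intro r hr
      by_cases h : r ∈ Rbad
      · exact Finset.mem_union_right _ h
      · exact Finset.mem_union_left _ (hgood (Finset.mem_sdiff.mpr ⟨hr, h⟩))
    calc K.card ≤ (Agood ∪ Rbad).card := Finset.card_le_card hsub3
      _ ≤ Agood.card + Rbad.card := Finset.card_union_le _ _
  -- arithmetic: 2 * Bblk * (q+1)^2 < K.card
  have hkey : 2 * (Bblk * ((q+1).toNat)^2) < K.card := by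
    have hZ : 2 * (Bblk:ℤ) * (q+1)^2 < (L/mr) * (M/mr) := by
      have hQ : 2 * (Bblk:ℚ) * ((q:ℚ)+1)^2 < ((L/mr : ℤ):ℚ) * ((M/mr : ℤ):ℚ) := by
        rw [hSc] at hnoise
        have hLq : ((L/mr : ℤ):ℚ) * (mr:ℚ) = (L:ℚ) := by exact_mod_cast congrArg (Int.cast : ℤ → ℚ) hL0
        have hMq : ((M/mr : ℤ):ℚ) * (mr:ℚ) = (M:ℚ) := by exact_mod_cast congrArg (Int.cast : ℤ → ℚ) hM0
        push_cast at hnoise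
        rw [← hLq, ← hMq] at hnoise
        have hmrQ : (0:ℚ) < (mr:ℚ) := by exact_mod_cast hmr0
        have hmnQ : (0:ℚ) < (mn:ℚ) := by exact_mod_cast hmn0
        have hqQ : (0:ℚ) < (q:ℚ) + 1 := by
          have : (1:ℚ) ≤ (q:ℚ) := by exact_mod_cast hq1
          linarith
        have hre : (mn:ℚ)^2 / (mr:ℚ)^2 * (1/((q:ℚ)+1)^2) * (((L/mr : ℤ):ℚ) * ↑mr * (((M/mr : ℤ):ℚ) * ↑mr) / 2)
            = (mn:ℚ)^2 * (((L/mr : ℤ):ℚ) * ((M/mr : ℤ):ℚ)) / (2*((q:ℚ)+1)^2) := by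
          field_simp
        rw [hre, lt_div_iff₀ (by positivity)] at hnoise
        nlinarith [pow_pos hmnQ 2]
      exact_mod_cast hQ
    have hcast : (((q+1).toNat : ℤ)) = q + 1 := Int.toNat_of_nonneg (by omega)
    have : (2 * (Bblk * ((q+1).toNat)^2) : ℤ) < (K.card : ℤ) := by
      rw [hKcard]
      push_cast [hcast]
      linarith
    exact_mod_cast this
  constructor
  · omega
  · intro c hc
    set Cgood := K.filter
      (fun r => ∀ c' : C, c' ≠ c → votesIn L M mr v' r c' < votesIn L M mr v' r c) with hCgooddef
    have hdisj2 : Disjoint Cgood Agood := by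
      rw [Finset.disjoint_left]
      intro r hrC hrA
      rw [hCgooddef, Finset.mem_filter] at hrC
      rw [hAgooddef, Finset.mem_filter] at hrA
      have h1 := hrC.2 A (Ne.symm hc)
      have h2 := hrA.2 c hc
      omega
    have hCsub : Cgood ⊆ K := Finset.filter_subset _ _
    have hsum : Cgood.card + Agood.card ≤ K.card := by
      rw [← Finset.card_union_of_disjoint hdisj2]
      exact Finset.card_le_card (Finset.union_subset hCsub (Finset.filter_subset _ _))
    omega
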